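/- Let b ≥ 0 and let m1, m0 : ℝ → ℝ satisfy the smoothness assumption with constant b on [0,1]. Let 0 ≤ p' < p ≤ 1 and set ΔY := ∫_{p'}^{p} (m1(v) − m0(v)) dv. Then ∫_0^1 (m1(v) − m0(v)) dv ≥ ΔY/(p − p') − (2b/3)·(p³ − p'³)/(p − p') + b·(p² − p'²)/(p − p') − b. -/

import Mathlib

open intervalIntegral Set


lemma hasDerivAt_mul_abs (x : ℝ) : HasDerivAt (fun y : ℝ => y * |y|) (2 * |x|) x := by
  rcases lt_trichotomy x 0 with hx | hx | hx
  · have h : (fun y : ℝ => y * |y|) =ᶠ[nhds x] fun y => -(y * y) := by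
      filter_upwards [eventually_lt_nhds hx] with y hy
      rw [abs_of_neg hy]; ring
    have h2 : HasDerivAt (fun y : ℝ => -(y * y)) (2 * |x|) x := by
      have := ((hasDerivAt_id x).mul (hasDerivAt_id x)).neg
      refine this.congr_deriv ?_
      rw [abs_of_neg hx]; simp [id]; ring
    exact h2.congr_of_eventuallyEq h
  · subst hx
    rw [hasDerivAt_iff_isLittleO]
    simp only [mul_zero, abs_zero, sub_zero, zero_mul]
    rw [Asymptotics.isLittleO_iff]
    intro c hc
    filter_upwards [Metric.ball_mem_nhds (0:ℝ) hc] with y hy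
    simp only [Metric.mem_ball, Real.dist_eq, sub_zero] at hy
    rw [smul_zero, sub_zero]
    have : ‖y * |y|‖ = |y| * |y| := by
      rw [norm_mul, Real.norm_eq_abs, Real.norm_eq_abs, abs_abs]
    rw [this, Real.norm_eq_abs]
    exact mul_le_mul_of_nonneg_right hy.le (abs_nonneg y)
  · have h : (fun y : ℝ => y * |y|) =ᶠ[nhds x] fun y => y * y := by
      filter_upwards [eventually_gt_nhds hx] with y hy
      rw [abs_of_pos hy]
    have h2 : HasDerivAt (fun y : ℝ => y * y) (2 * |x|) x := by
      have := (hasDerivAt_id x).mul (hasDerivAt_id x)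
      refine this.congr_deriv ?_
      rw [abs_of_pos hx]; simp [id]; ring
    exact h2.congr_of_eventuallyEq h

lemma hasDerivAt_sq_mul_abs (x : ℝ) :
    HasDerivAt (fun y : ℝ => y ^ 2 * |y| / 3) (x * |x|) x := by
  rcases lt_trichotomy x 0 with hx | hx | hx
  · have h : (fun y : ℝ => y ^ 2 * |y| / 3) =ᶠ[nhds x] fun y => -(y ^ 3) / 3 := by
      filter_upwards [eventually_lt_nhds hx] with y hy
      rw [abs_of_neg hy]; ring
    have h2 : HasDerivAt (fun y : ℝ => -(y ^ 3) / 3) (x * |x|) x := by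
      have := ((hasDerivAt_pow 3 x).neg).div_const 3
      refine this.congr_deriv ?_
      rw [abs_of_neg hx]; simp [id]; ring
    exact h2.congr_of_eventuallyEq h
  · subst hx
    rw [hasDerivAt_iff_isLittleO]
    simp only [abs_zero, mul_zero, zero_mul, sub_zero, ne_eq, OfNat.ofNat_ne_zero,
      not_false_eq_true, zero_pow, zero_div, zero_mul]
    rw [Asymptotics.isLittleO_iff]
    intro c hc
    have hc3 : (0:ℝ) < min c 1 := lt_min hc one_pos
    filter_upwards [Metric.ball_mem_nhds (0:ℝ) hc3] with y hy
    simp only [Metric.mem_ball, Real.dist_eq, sub_zero] at hy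
    have h1 : |y| < 1 := lt_of_lt_of_le hy (min_le_right _ _)
    have h2 : |y| < c := lt_of_lt_of_le hy (min_le_left _ _)
    rw [smul_zero, sub_zero]
    have : ‖y ^ 2 * |y| / 3‖ = |y| * |y| * |y| / 3 := by
      rw [norm_div, norm_mul, norm_pow, Real.norm_eq_abs, Real.norm_eq_abs, abs_abs]
      rw [Real.norm_eq_abs, abs_of_pos (by norm_num : (0:ℝ) < 3)]; ring
    rw [this, Real.norm_eq_abs]
    nlinarith [abs_nonneg y]
  · have h : (fun y : ℝ => y ^ 2 * |y| / 3) =ᶠ[nhds x] fun y => y ^ 3 / 3 := by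
      filter_upwards [eventually_gt_nhds hx] with y hy
      rw [abs_of_pos hy]; ring
    have h2 : HasDerivAt (fun y : ℝ => y ^ 3 / 3) (x * |x|) x := by
      have := (hasDerivAt_pow 3 x).div_const 3
      refine this.congr_deriv ?_
      rw [abs_of_pos hx]; simp [id]; ring
    exact h2.congr_of_eventuallyEq h

lemma integral_abs_sub (v a c : ℝ) :
    (∫ u in a..c, |v - u|) = ((c - v) * |c - v| + (v - a) * |v - a|) / 2 := by
  have hF : ∀ u : ℝ, HasDerivAt (fun u : ℝ => (u - v) * |u - v| / 2) (|v - u|) u := by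
    intro u
    have h := ((hasDerivAt_mul_abs (u - v)).comp u
      ((hasDerivAt_id u).sub_const v)).div_const 2
    refine h.congr_deriv ?_
    · simp [abs_sub_comm v u]
  have hint : IntervalIntegrable (fun u : ℝ => |v - u|) MeasureTheory.volume a c :=
    (Continuous.abs (by continuity)).intervalIntegrable a c
  rw [intervalIntegral.integral_eq_sub_of_hasDerivAt (fun u _ => hF u) hint]
  rw [abs_sub_comm a v]
  ring

lemma integral_sub_mul_abs (c : ℝ) :
    (∫ v in (0:ℝ)..1, (v - c) * |v - c|) = ((1 - c) ^ 2 * |1 - c| - c ^ 2 * |c|) / 3 := by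
  have hF : ∀ u : ℝ, HasDerivAt (fun u : ℝ => (u - c) ^ 2 * |u - c| / 3)
      ((u - c) * |u - c|) u := by
    intro u
    have h := (hasDerivAt_sq_mul_abs (u - c)).comp u ((hasDerivAt_id u).sub_const c)
    refine h.congr_deriv ?_
    · simp
  have hint : IntervalIntegrable (fun v : ℝ => (v - c) * |v - c|) MeasureTheory.volume 0 1 :=
    (Continuous.mul (by continuity) (Continuous.abs (by continuity))).intervalIntegrable 0 1
  rw [intervalIntegral.integral_eq_sub_of_hasDerivAt (fun u _ => hF u) hint]
  rw [abs_sub_comm 0 c]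
  simp
  ring

/-- Lower bound on the ATE without misreporting under the smoothness assumption:
`ATE ≥ ΔY/(p - p') - (2b/3)(p³ - p'³)/(p - p') + b(p² - p'²)/(p - p') - b`. -/
theorem ate_lower_bound_no_misreporting
    (b : ℝ) (hb : 0 ≤ b) (m1 m0 : ℝ → ℝ)
    (hm1 : ∀ v1 ∈ Set.Icc (0:ℝ) 1, ∀ v2 ∈ Set.Icc (0:ℝ) 1, |m1 v1 - m1 v2| ≤ b * |v1 - v2|)
    (hm0 : ∀ v1 ∈ Set.Icc (0:ℝ) 1, ∀ v2 ∈ Set.Icc (0:ℝ) 1, |m0 v1 - m0 v2| ≤ b * |v1 - v2|)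
    (p' p : ℝ) (hp' : 0 ≤ p') (hpp : p' < p) (hp : p ≤ 1)
    (ΔY : ℝ) (hΔY : ΔY = ∫ v in p'..p, (m1 v - m0 v)) :
    (∫ v in (0:ℝ)..1, (m1 v - m0 v)) ≥
      ΔY / (p - p') - (2 * b / 3) * (p ^ 3 - p' ^ 3) / (p - p')
        + b * (p ^ 2 - p' ^ 2) / (p - p') - b := by
  have hq : (0:ℝ) < p - p' := sub_pos.2 hpp
  have hp1 : p' ≤ 1 := hpp.le.trans hp
  have hp0 : 0 ≤ p := hp'.trans hpp.le
  -- continuity of the MTE contrast on [0,1]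
  have hcont : ContinuousOn (fun v => m1 v - m0 v) (Icc (0:ℝ) 1) := by
    have hlip : LipschitzOnWith (Real.toNNReal (2 * b)) (fun v => m1 v - m0 v)
        (Icc (0:ℝ) 1) := by
      apply LipschitzOnWith.of_dist_le_mul
      intro x hx y hy
      simp only [Real.dist_eq]
      have h1 := hm1 x hx y hy
      have h0 := hm0 x hx y hy
      have : |m1 x - m0 x - (m1 y - m0 y)| ≤ |m1 x - m1 y| + |m0 x - m0 y| := by
        have : m1 x - m0 x - (m1 y - m0 y) = (m1 x - m1 y) - (m0 x - m0 y) := by ring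
        rw [this]; exact abs_sub _ _
      have hcoe : (Real.toNNReal (2 * b) : ℝ) = 2 * b :=
        Real.coe_toNNReal _ (by positivity)
      rw [hcoe]
      linarith
    exact hlip.continuousOn
  have hsub1 : uIcc p' p ⊆ Icc (0:ℝ) 1 := by
    rw [uIcc_of_le hpp.le]; exact Icc_subset_Icc hp' hp
  have hsub0 : uIcc (0:ℝ) 1 ⊆ Icc (0:ℝ) 1 := by
    rw [uIcc_of_le zero_le_one]
  -- pointwise key bound
  have key : ∀ v ∈ Icc (0:ℝ) 1,
      ΔY ≤ (m1 v - m0 v) * (p - p')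
        + b * ((p - v) * |p - v| + (v - p') * |v - p'|) := by
    intro v hv
    have habs : Continuous fun u : ℝ => |v - u| :=
      (continuous_const.sub continuous_id).abs
    have hmono : (∫ u in p'..p, (m1 u - m0 u))
        ≤ ∫ u in p'..p, ((m1 v - m0 v) + 2 * b * |v - u|) := by
      apply intervalIntegral.integral_mono_on hpp.le
      · exact (hcont.mono hsub1).intervalIntegrable
      · exact (continuous_const.add (continuous_const.mul habs)).intervalIntegrable _ _
      · intro u hu
        have hu01 : u ∈ Icc (0:ℝ) 1 := ⟨hp'.trans hu.1, hu.2.trans hp⟩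
        have h1 := hm1 u hu01 v hv
        have h0 := hm0 u hu01 v hv
        have a1 : m1 u - m1 v ≤ b * |u - v| := (le_abs_self _).trans h1
        have a0 : -(b * |u - v|) ≤ m0 u - m0 v := (abs_le.mp h0).1
        rw [abs_sub_comm v u]
        linarith
    have e1 : (∫ u in p'..p, ((m1 v - m0 v) + 2 * b * |v - u|))
        = (m1 v - m0 v) * (p - p')
          + b * ((p - v) * |p - v| + (v - p') * |v - p'|) := by
      rw [intervalIntegral.integral_add (g := fun u => 2 * b * |v - u|) (intervalIntegrable_const)
          ((continuous_const.mul habs).intervalIntegrable _ _),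
        intervalIntegral.integral_const, intervalIntegral.integral_const_mul,
        integral_abs_sub]
      simp only [smul_eq_mul]
      ring
    rw [hΔY]
    calc (∫ u in p'..p, (m1 u - m0 u)) ≤ _ := hmono
      _ = _ := e1
  -- continuity of the lower envelope pieces
  have cB : Continuous fun v : ℝ => (p - v) * |p - v| :=
    (continuous_const.sub continuous_id).mul (continuous_const.sub continuous_id).abs
  have cA : Continuous fun v : ℝ => (v - p') * |v - p'| :=
    (continuous_id.sub continuous_const).mul (continuous_id.sub continuous_const).abs
  have cL : Continuous fun v : ℝ =>
      (ΔY - b * ((p - v) * |p - v| + (v - p') * |v - p'|)) / (p - p') :=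
    ((continuous_const.sub (continuous_const.mul (cB.add cA))).div_const _)
  -- integrate the pointwise bound
  have main : (∫ v in (0:ℝ)..1,
        (ΔY - b * ((p - v) * |p - v| + (v - p') * |v - p'|)) / (p - p'))
      ≤ ∫ v in (0:ℝ)..1, (m1 v - m0 v) := by
    apply intervalIntegral.integral_mono_on zero_le_one
    · exact cL.intervalIntegrable _ _
    · exact (hcont.mono hsub0).intervalIntegrable
    · intro v hv
      rw [div_le_iff₀ hq]
      linarith [key v hv]
  -- compute the lower integral
  have hA : (∫ v in (0:ℝ)..1, (v - p') * |v - p'|) = ((1 - p') ^ 3 - p' ^ 3) / 3 := by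
    rw [integral_sub_mul_abs p', abs_of_nonneg (by linarith : (0:ℝ) ≤ 1 - p'),
      abs_of_nonneg hp']
    ring
  have hB : (∫ v in (0:ℝ)..1, (p - v) * |p - v|) = (p ^ 3 - (1 - p) ^ 3) / 3 := by
    have hpt : ∀ v : ℝ, (p - v) * |p - v| = -((v - p) * |v - p|) := by
      intro v; rw [abs_sub_comm p v]; ring
    simp_rw [hpt]
    rw [intervalIntegral.integral_neg, integral_sub_mul_abs p,
      abs_of_nonneg (by linarith : (0:ℝ) ≤ 1 - p), abs_of_nonneg hp0]
    ring
  have hL : (∫ v in (0:ℝ)..1,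
        (ΔY - b * ((p - v) * |p - v| + (v - p') * |v - p'|)) / (p - p'))
      = (ΔY - b * ((p ^ 3 - (1 - p) ^ 3) / 3 + ((1 - p') ^ 3 - p' ^ 3) / 3)) / (p - p') := by
    rw [intervalIntegral.integral_div]
    congr 1
    rw [intervalIntegral.integral_sub (g := fun v => b * ((p - v) * |p - v| + (v - p') * |v - p'|))
        intervalIntegrable_const
        ((continuous_const.mul (cB.add cA)).intervalIntegrable _ _),
      intervalIntegral.integral_const, intervalIntegral.integral_const_mul,
      intervalIntegral.integral_add (cB.intervalIntegrable _ _) (cA.intervalIntegrable _ _),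
      hA, hB]
    simp
  have hEq : ΔY / (p - p') - (2 * b / 3) * (p ^ 3 - p' ^ 3) / (p - p')
        + b * (p ^ 2 - p' ^ 2) / (p - p') - b
      = (ΔY - b * ((p ^ 3 - (1 - p) ^ 3) / 3 + ((1 - p') ^ 3 - p' ^ 3) / 3)) / (p - p') := by
    field_simp
    ring
  rw [ge_iff_le, hEq, ← hL]
  exact main
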